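/- Fix grid centers u_1, …, u_M ∈ ℝ², bandwidth σ > 0, and a weight function w : ℝ → ℝ≥0 that is L_w-Lipschitz and bounded by W. For a finite multiset D of points (b, p) ∈ ℝ² define the persistence image I(D)[m] = Σ_{(b,p)∈D} w(p)·exp(−‖u_m − (b,p)‖²/(2σ²)). Then for two multisets D, D' of the same cardinality n with a bijection matching points at distance at most δ (in Euclidean norm on ℝ², where moving a point changes both its location and its persistence coordinate by at most δ), one has |I(D)[m] − I(D')[m]| ≤ n·(L_w·δ + W·δ/(σ·√e)) for every m, using that the Gaussian kernel x ↦ exp(−‖x‖²/(2σ²)) is (1/(σ√e))-Lipschitz. -/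

import Mathlib

open Real

private lemma coord_le_norm (v : EuclideanSpace ℝ (Fin 2)) (j : Fin 2) : |v j| ≤ ‖v‖ := by
  rw [EuclideanSpace.norm_eq]
  have h1 : |v j| = Real.sqrt (|v j| ^ 2) := by
    rw [Real.sqrt_sq_eq_abs, abs_abs]
  rw [h1]
  apply Real.sqrt_le_sqrt
  have : ‖v j‖ ^ 2 ≤ ∑ i, ‖v i‖ ^ 2 :=
    Finset.single_le_sum (f := fun i => ‖v i‖ ^ 2) (fun i _ => by positivity) (Finset.mem_univ j)
  simpa using this

private lemma gauss_deriv (σ : ℝ) (hσ : 0 < σ) (t : ℝ) :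
    HasDerivAt (fun t : ℝ => Real.exp (-t ^ 2 / (2 * σ ^ 2)))
      (Real.exp (-t ^ 2 / (2 * σ ^ 2)) * (-(2 * t) / (2 * σ ^ 2))) t := by
  have h : HasDerivAt (fun t : ℝ => -t ^ 2 / (2 * σ ^ 2)) (-(2 * t) / (2 * σ ^ 2)) t := by
    have := ((hasDerivAt_pow 2 t).neg).div_const (2 * σ ^ 2)
    simpa using this
  simpa using h.exp

private lemma gauss_deriv_bound (σ : ℝ) (hσ : 0 < σ) (t : ℝ) :
    |Real.exp (-t ^ 2 / (2 * σ ^ 2)) * (-(2 * t) / (2 * σ ^ 2))| ≤ (σ * Real.sqrt (Real.exp 1))⁻¹ := by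
  have hs : Real.sqrt (Real.exp 1) = Real.exp (2⁻¹) := by
    rw [← Real.exp_half]; norm_num
  have key : |t| * Real.exp (-t ^ 2 / (2 * σ ^ 2)) ≤ σ * Real.exp (-2⁻¹) := by
    set s := |t| / σ with hsdef
    have hs0 : 0 ≤ s := div_nonneg (abs_nonneg t) hσ.le
    have h1 : s ≤ Real.exp ((s ^ 2 - 1) / 2) := by
      have := Real.add_one_le_exp ((s ^ 2 - 1) / 2)
      nlinarith [sq_nonneg (s - 1)]
    have ht : |t| = s * σ := by rw [hsdef, div_mul_cancel₀ _ hσ.ne']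
    have ht2 : -t ^ 2 / (2 * σ ^ 2) = -s ^ 2 / 2 := by
      have hss : s ^ 2 = t ^ 2 / σ ^ 2 := by rw [hsdef, div_pow, sq_abs]
      rw [hss]
      ring
    rw [ht, ht2]
    calc s * σ * Real.exp (-s ^ 2 / 2) ≤ Real.exp ((s ^ 2 - 1) / 2) * σ * Real.exp (-s ^ 2 / 2) := by
          have h2 := mul_le_mul_of_nonneg_right (mul_le_mul_of_nonneg_right h1 hσ.le)
            (Real.exp_pos (-s ^ 2 / 2)).le
          linarith
      _ = σ * Real.exp (-2⁻¹) := by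
          rw [mul_assoc, mul_comm, mul_assoc, ← Real.exp_add]; ring_nf
  have heq : |Real.exp (-t ^ 2 / (2 * σ ^ 2)) * (-(2 * t) / (2 * σ ^ 2))| =
      |t| * Real.exp (-t ^ 2 / (2 * σ ^ 2)) / σ ^ 2 := by
    rw [abs_mul, abs_of_pos (Real.exp_pos _), abs_div, abs_neg, abs_mul,
      abs_of_pos (by positivity : (0:ℝ) < 2 * σ ^ 2), abs_two]
    field_simp
  rw [heq, hs, div_le_iff₀ (by positivity)]
  have hrhs : (σ * Real.exp 2⁻¹)⁻¹ * σ ^ 2 = σ * Real.exp (-2⁻¹) := by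
    rw [Real.exp_neg, mul_inv]
    field_simp
  rw [hrhs]
  exact key

private lemma gauss_lip (σ : ℝ) (hσ : 0 < σ) (a b : ℝ) :
    |Real.exp (-a ^ 2 / (2 * σ ^ 2)) - Real.exp (-b ^ 2 / (2 * σ ^ 2))| ≤
      (σ * Real.sqrt (Real.exp 1))⁻¹ * |a - b| := by
  have := Convex.norm_image_sub_le_of_norm_hasDerivWithin_le
    (f := fun t : ℝ => Real.exp (-t ^ 2 / (2 * σ ^ 2)))
    (f' := fun t : ℝ => Real.exp (-t ^ 2 / (2 * σ ^ 2)) * (-(2 * t) / (2 * σ ^ 2)))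
    (C := (σ * Real.sqrt (Real.exp 1))⁻¹) (s := Set.univ)
    (fun t _ => (gauss_deriv σ hσ t).hasDerivWithinAt)
    (fun t _ => by rw [Real.norm_eq_abs]; exact gauss_deriv_bound σ hσ t)
    convex_univ (Set.mem_univ b) (Set.mem_univ a)
  simp only [Real.norm_eq_abs] at this
  exact this

theorem stmt_8 (M : ℕ) (u : Fin M → EuclideanSpace ℝ (Fin 2))
    (σ : ℝ) (hσ : 0 < σ)
    (w : ℝ → ℝ) (Lw W : ℝ) (hLw : 0 ≤ Lw) (hW : 0 ≤ W)
    (hwLip : ∀ a b : ℝ, |w a - w b| ≤ Lw * |a - b|)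
    (hw0 : ∀ a, 0 ≤ w a) (hwW : ∀ a, w a ≤ W)
    (n : ℕ) (x x' : Fin n → EuclideanSpace ℝ (Fin 2))
    (δ : ℝ) (hδ0 : 0 ≤ δ) (hmatch : ∀ i, ‖x i - x' i‖ ≤ δ) :
    ∀ m : Fin M,
      |(∑ i, w (x i 1) * Real.exp (-‖u m - x i‖ ^ 2 / (2 * σ ^ 2))) -
        (∑ i, w (x' i 1) * Real.exp (-‖u m - x' i‖ ^ 2 / (2 * σ ^ 2)))| ≤
        n * (Lw * δ + W * δ / (σ * Real.sqrt (Real.exp 1))) := by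
  intro m
  rw [← Finset.sum_sub_distrib]
  calc |∑ i, (w (x i 1) * Real.exp (-‖u m - x i‖ ^ 2 / (2 * σ ^ 2)) -
        w (x' i 1) * Real.exp (-‖u m - x' i‖ ^ 2 / (2 * σ ^ 2)))|
      ≤ ∑ i, |w (x i 1) * Real.exp (-‖u m - x i‖ ^ 2 / (2 * σ ^ 2)) -
        w (x' i 1) * Real.exp (-‖u m - x' i‖ ^ 2 / (2 * σ ^ 2))| := Finset.abs_sum_le_sum_abs _ _
    _ ≤ ∑ _i : Fin n, (Lw * δ + W * δ / (σ * Real.sqrt (Real.exp 1))) := by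
        apply Finset.sum_le_sum
        intro i _
        set ga := Real.exp (-‖u m - x i‖ ^ 2 / (2 * σ ^ 2)) with hga
        set gb := Real.exp (-‖u m - x' i‖ ^ 2 / (2 * σ ^ 2)) with hgb
        have hga1 : ga ≤ 1 := by
          rw [hga]
          apply Real.exp_le_one_iff.mpr
          apply div_nonpos_of_nonpos_of_nonneg
          · simp [sq_nonneg]
          · positivity
        have hga0 : 0 < ga := Real.exp_pos _
        have hgb0 : 0 < gb := Real.exp_pos _
        have hcoord : |x i 1 - x' i 1| ≤ δ := by
          have := coord_le_norm (x i - x' i) 1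
          simp only [PiLp.sub_apply] at this
          exact this.trans (hmatch i)
        have hnorm : |‖u m - x i‖ - ‖u m - x' i‖| ≤ δ := by
          have h1 : |‖u m - x i‖ - ‖u m - x' i‖| ≤ ‖(u m - x i) - (u m - x' i)‖ :=
            abs_norm_sub_norm_le _ _
          have h2 : (u m - x i) - (u m - x' i) = x' i - x i := by abel
          rw [h2, norm_sub_rev (x' i)] at h1
          exact h1.trans (hmatch i)
        have hg : |ga - gb| ≤ (σ * Real.sqrt (Real.exp 1))⁻¹ * δ := by
          refine (gauss_lip σ hσ _ _).trans ?_
          have hc : (0:ℝ) ≤ (σ * Real.sqrt (Real.exp 1))⁻¹ := by positivity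
          exact mul_le_mul_of_nonneg_left hnorm hc
        have decomp : w (x i 1) * ga - w (x' i 1) * gb =
            (w (x i 1) - w (x' i 1)) * ga + w (x' i 1) * (ga - gb) := by ring
        rw [decomp]
        refine (abs_add_le _ _).trans ?_
        rw [abs_mul, abs_mul]
        have t1 : |w (x i 1) - w (x' i 1)| * |ga| ≤ Lw * δ := by
          have h1 : |w (x i 1) - w (x' i 1)| ≤ Lw * δ :=
            (hwLip _ _).trans (mul_le_mul_of_nonneg_left hcoord hLw)
          have h2 : |ga| ≤ 1 := by rw [abs_of_pos hga0]; exact hga1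
          calc |w (x i 1) - w (x' i 1)| * |ga| ≤ |w (x i 1) - w (x' i 1)| * 1 :=
                mul_le_mul_of_nonneg_left h2 (abs_nonneg _)
            _ = _ := mul_one _
            _ ≤ Lw * δ := h1
        have t2 : |w (x' i 1)| * |ga - gb| ≤ W * δ / (σ * Real.sqrt (Real.exp 1)) := by
          have hW' : |w (x' i 1)| ≤ W := by rw [abs_of_nonneg (hw0 _)]; exact hwW _
          calc |w (x' i 1)| * |ga - gb| ≤ W * ((σ * Real.sqrt (Real.exp 1))⁻¹ * δ) :=
                mul_le_mul hW' hg (abs_nonneg _) hW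
            _ = W * δ / (σ * Real.sqrt (Real.exp 1)) := by ring
        linarith
    _ = n * (Lw * δ + W * δ / (σ * Real.sqrt (Real.exp 1))) := by
        rw [Finset.sum_const, Finset.card_univ, Fintype.card_fin, nsmul_eq_mul]
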